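/- The orbit of the point i under SL₂(ℤ) in the upper half-plane avoids a horoball at ∞ and at every rational boundary point. Precisely: (i) there exists T > 0 such that Im(γ·i) ≤ T for all γ ∈ SL₂(ℤ); and (ii) for every x ∈ ℚ there exists r > 0 such that |γ·i − (x + r·i)| ≥ r for all γ ∈ SL₂(ℤ) (the orbit point γ·i being regarded as an element of ℂ). Hence no point of ℙ¹(ℚ) is a horospherical limit point of SL₂(ℤ). -/

import Mathlib

open Matrix Complex

/-- The image of `i ∈ ℍ` under the Möbius action of `γ ∈ SL₂(ℤ)`, as a complex number. -/
noncomputable def moebiusActI (γ : Matrix.SpecialLinearGroup (Fin 2) ℤ) : ℂ :=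
  (((γ : Matrix (Fin 2) (Fin 2) ℤ) 0 0 : ℂ) * Complex.I +
      ((γ : Matrix (Fin 2) (Fin 2) ℤ) 0 1 : ℂ)) /
    (((γ : Matrix (Fin 2) (Fin 2) ℤ) 1 0 : ℂ) * Complex.I +
      ((γ : Matrix (Fin 2) (Fin 2) ℤ) 1 1 : ℂ))

lemma moebius_repr (γ : Matrix.SpecialLinearGroup (Fin 2) ℤ) :
    moebiusActI γ = ((((γ : Matrix (Fin 2) (Fin 2) ℤ) 0 0 * (γ : Matrix (Fin 2) (Fin 2) ℤ) 1 0
        + (γ : Matrix (Fin 2) (Fin 2) ℤ) 0 1 * (γ : Matrix (Fin 2) (Fin 2) ℤ) 1 1 : ℤ) : ℂ) + Complex.I) /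
      ((((γ : Matrix (Fin 2) (Fin 2) ℤ) 1 0 ^ 2 + (γ : Matrix (Fin 2) (Fin 2) ℤ) 1 1 ^ 2 : ℤ) : ℂ)) := by
  set a := (γ : Matrix (Fin 2) (Fin 2) ℤ) 0 0
  set b := (γ : Matrix (Fin 2) (Fin 2) ℤ) 0 1
  set c := (γ : Matrix (Fin 2) (Fin 2) ℤ) 1 0
  set d := (γ : Matrix (Fin 2) (Fin 2) ℤ) 1 1
  have hdet : a * d - b * c = 1 := by
    have := γ.2; rw [Matrix.det_fin_two] at this; exact this
  have hcd : ¬(c = 0 ∧ d = 0) := by rintro ⟨h1, h2⟩; simp [h1, h2] at hdet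
  have hden : (c : ℂ) * Complex.I + d ≠ 0 := by
    intro h
    have h1 : ((c : ℝ) : ℂ) * Complex.I + ((d : ℝ) : ℂ) = 0 := by push_cast at h ⊢; exact h
    have hre := congrArg Complex.im h1
    have him := congrArg Complex.re h1
    simp at hre him
    exact hcd ⟨by exact_mod_cast hre, by exact_mod_cast him⟩
  have hN : ((c ^ 2 + d ^ 2 : ℤ) : ℂ) ≠ 0 := by
    have : c ^ 2 + d ^ 2 ≠ 0 := by
      intro h
      exact hcd ⟨by nlinarith [sq_nonneg c, sq_nonneg d], by nlinarith [sq_nonneg c, sq_nonneg d]⟩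
    exact_mod_cast this
  have hC : (a : ℂ) * d - b * c = 1 := by exact_mod_cast hdet
  rw [moebiusActI, div_eq_div_iff hden hN]
  push_cast
  linear_combination (Complex.I * (d : ℂ) - (c : ℂ)) * hC - (c : ℂ) * Complex.I_sq

lemma N_pos (γ : Matrix.SpecialLinearGroup (Fin 2) ℤ) :
    1 ≤ (γ : Matrix (Fin 2) (Fin 2) ℤ) 1 0 ^ 2 + (γ : Matrix (Fin 2) (Fin 2) ℤ) 1 1 ^ 2 := by
  set c := (γ : Matrix (Fin 2) (Fin 2) ℤ) 1 0
  set d := (γ : Matrix (Fin 2) (Fin 2) ℤ) 1 1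
  have hdet : (γ : Matrix (Fin 2) (Fin 2) ℤ) 0 0 * d - (γ : Matrix (Fin 2) (Fin 2) ℤ) 0 1 * c = 1 := by
    have := γ.2; rw [Matrix.det_fin_two] at this; exact this
  rcases eq_or_ne c 0 with hc | hc
  · have hd : d ≠ 0 := by intro hd0; rw [hc, hd0] at hdet; simp at hdet
    nlinarith [sq_nonneg c, Int.one_le_abs hd, _root_.sq_abs d]
  · nlinarith [sq_nonneg d, Int.one_le_abs hc, _root_.sq_abs c]

lemma im_repr (M N : ℤ) : (((M : ℂ) + Complex.I) / ((N : ℤ) : ℂ)).im = 1 / (N : ℝ) := by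
  rw [show ((N : ℤ) : ℂ) = ((N : ℝ) : ℂ) by push_cast; ring, Complex.div_ofReal_im]
  simp

/-- The orbit `SL₂(ℤ)·i` avoids a horoball at `∞` and a horoball at every rational
boundary point; hence no point of `ℙ¹(ℚ)` is a horospherical limit point of `SL₂(ℤ)`. -/
theorem rational_points_not_horospherical_limit_points :
    (∃ T : ℝ, 0 < T ∧ ∀ γ : Matrix.SpecialLinearGroup (Fin 2) ℤ,
        (moebiusActI γ).im ≤ T) ∧
    (∀ x : ℚ, ∃ r : ℝ, 0 < r ∧ ∀ γ : Matrix.SpecialLinearGroup (Fin 2) ℤ,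
        r ≤ ‖moebiusActI γ - ((x : ℂ) + (r : ℂ) * Complex.I)‖) := by
  constructor
  · refine ⟨1, one_pos, fun γ => ?_⟩
    rw [moebius_repr, im_repr]
    have hN1 : 1 ≤ (γ : Matrix (Fin 2) (Fin 2) ℤ) 1 0 ^ 2 + (γ : Matrix (Fin 2) (Fin 2) ℤ) 1 1 ^ 2 :=
      N_pos γ
    have hNr : (1 : ℝ) ≤ (((γ : Matrix (Fin 2) (Fin 2) ℤ) 1 0 ^ 2 +
        (γ : Matrix (Fin 2) (Fin 2) ℤ) 1 1 ^ 2 : ℤ) : ℝ) := by exact_mod_cast hN1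
    rw [div_le_one (by linarith)]
    linarith
  · intro x
    set p : ℤ := x.num with hpdef
    set q : ℤ := (x.den : ℤ) with hqdef
    have hq1 : 1 ≤ q := by have := x.pos; omega
    have hqr : (1 : ℝ) ≤ (q : ℝ) := by exact_mod_cast hq1
    have hqr0 : (0 : ℝ) < (q : ℝ) := by linarith
    set r : ℝ := 1 / (2 * (q : ℝ) ^ 2) with hrdef
    have hr : 0 < r := by positivity
    refine ⟨r, hr, fun γ => ?_⟩
    set a := (γ : Matrix (Fin 2) (Fin 2) ℤ) 0 0
    set b := (γ : Matrix (Fin 2) (Fin 2) ℤ) 0 1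
    set c := (γ : Matrix (Fin 2) (Fin 2) ℤ) 1 0
    set d := (γ : Matrix (Fin 2) (Fin 2) ℤ) 1 1
    have hdet : a * d - b * c = 1 := by
      have := γ.2; rw [Matrix.det_fin_two] at this; exact this
    set M : ℤ := a * c + b * d with hMdef
    set N : ℤ := c ^ 2 + d ^ 2 with hNdef
    have hN1 : 1 ≤ N := N_pos γ
    have hNr : (1 : ℝ) ≤ (N : ℝ) := by exact_mod_cast hN1
    have hNr0 : (0 : ℝ) < (N : ℝ) := by linarith
    set u : ℤ := q * a - p * c with hudef
    set v : ℤ := q * b - p * d with hvdef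
    have huv : u * d - v * c = q := by
      simp only [hudef, hvdef]; linear_combination q * hdet
    have hkey : (q * M - p * N) ^ 2 + q ^ 2 = N * (u ^ 2 + v ^ 2) := by
      simp only [hMdef, hNdef, hudef, hvdef]
      linear_combination (-(q ^ 2) * (a * d - b * c + 1)) * hdet
    have hS : 1 ≤ u ^ 2 + v ^ 2 := by
      rcases eq_or_ne u 0 with hu | hu
      · have hv : v ≠ 0 := by
          intro hv0
          rw [hu, hv0] at huv
          simp at huv
          omega
        nlinarith [sq_nonneg u, Int.one_le_abs hv, _root_.sq_abs v]
      · nlinarith [sq_nonneg v, Int.one_le_abs hu, _root_.sq_abs u]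
    have hkeyR : ((q : ℝ) * M - p * N) ^ 2 + (q : ℝ) ^ 2 =
        (N : ℝ) * ((u : ℝ) ^ 2 + (v : ℝ) ^ 2) := by exact_mod_cast hkey
    have hSR : (1 : ℝ) ≤ (u : ℝ) ^ 2 + (v : ℝ) ^ 2 := by exact_mod_cast hS
    rw [moebius_repr]
    have hNC : ((N : ℤ) : ℂ) ≠ 0 := by
      have : (N : ℝ) ≠ 0 := ne_of_gt hNr0
      exact_mod_cast this
    have hz : (((M : ℤ) : ℂ) + Complex.I) / ((N : ℤ) : ℂ) -
        ((x : ℂ) + (r : ℂ) * Complex.I) =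
        Complex.ofReal ((M : ℝ) / (N : ℝ) - (x : ℝ)) +
          Complex.ofReal (1 / (N : ℝ) - r) * Complex.I := by
      rw [eq_comm]
      rw [show ((x : ℚ) : ℂ) = ((x : ℝ) : ℂ) by push_cast; ring]
      field_simp
      push_cast
      field_simp
      ring
    rw [hz]
    have habs : ‖Complex.ofReal ((M : ℝ) / (N : ℝ) - (x : ℝ)) +
        Complex.ofReal (1 / (N : ℝ) - r) * Complex.I‖ =
        Real.sqrt (((M : ℝ) / (N : ℝ) - (x : ℝ)) ^ 2 + (1 / (N : ℝ) - r) ^ 2) := by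
      rw [Complex.norm_def, Complex.normSq_apply]
      simp
      ring_nf
    rw [habs]
    have hx : (x : ℝ) = (p : ℝ) / (q : ℝ) := by
      rw [hpdef, hqdef, Rat.cast_def]
      push_cast
      ring
    rw [hx, Real.le_sqrt hr.le]
    have hexp : ((M : ℝ) / N - (p : ℝ) / q) ^ 2 + (1 / N - r) ^ 2 =
        ((((q : ℝ) * M - p * N) ^ 2 + q ^ 2 - 2 * r * q ^ 2 * N) + r ^ 2 * q ^ 2 * N ^ 2) /
          (q ^ 2 * N ^ 2) := by
      field_simp
      ring
    have h2r : 2 * r * (q : ℝ) ^ 2 = 1 := by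
      rw [hrdef]; field_simp
    rw [hexp, le_div_iff₀ (by positivity)]
    have h3 : 2 * r * (q : ℝ) ^ 2 * (N : ℝ) = (N : ℝ) := by rw [h2r, one_mul]
    have h4 : (N : ℝ) ≤ (N : ℝ) * ((u : ℝ) ^ 2 + (v : ℝ) ^ 2) :=
      le_mul_of_one_le_right hNr0.le hSR
    linarith [hkeyR, h3, h4]
    positivity
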